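/- For σ ∈ (0,1], the function f(t) = log σ − log(1−(1−σ)t) + (1−σ)·t·log t on (0,1) is convex, and f(t) ≤ 0 for all t ∈ (0,1). -/
import Mathlib

theorem stmt3 (σ : ℝ) (hσ : σ ∈ Set.Ioc (0:ℝ) 1) :
    ConvexOn ℝ (Set.Ioo (0:ℝ) 1)
      (fun t : ℝ => Real.log σ - Real.log (1 - (1 - σ) * t) + (1 - σ) * t * Real.log t) ∧
    ∀ t ∈ Set.Ioo (0:ℝ) 1,
      Real.log σ - Real.log (1 - (1 - σ) * t) + (1 - σ) * t * Real.log t ≤ 0 := by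
  obtain ⟨hσ0, hσ1⟩ := hσ
  have ha0 : (0:ℝ) ≤ 1 - σ := by linarith
  -- key positivity: 1 - (1-σ) t > 0 for t ∈ Ioo 0 1
  have hpos : ∀ t ∈ Set.Ioo (0:ℝ) 1, 0 < 1 - (1 - σ) * t := by
    intro t ht
    nlinarith [ht.1, ht.2]
  constructor
  · -- convexity
    have h1 : ConvexOn ℝ (Set.Ioi (0:ℝ)) (fun x : ℝ => -Real.log x) :=
      strictConcaveOn_log_Ioi.concaveOn.neg
    have g : ℝ →ᵃ[ℝ] ℝ := AffineMap.lineMap (1:ℝ) (σ:ℝ)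
    have h2 : ConvexOn ℝ (Set.Ioo (0:ℝ) 1)
        (fun t : ℝ => -Real.log (1 - (1 - σ) * t)) := by
      have key := h1.comp_affineMap (AffineMap.lineMap (1:ℝ) (σ:ℝ))
      have hfun : ((fun x : ℝ => -Real.log x) ∘ ⇑(AffineMap.lineMap (1:ℝ) (σ:ℝ)))
          = fun t : ℝ => -Real.log (1 - (1 - σ) * t) := by
        funext t
        simp only [Function.comp_apply, AffineMap.lineMap_apply, smul_eq_mul,
          vsub_eq_sub, vadd_eq_add]
        congr 2
        ring
      rw [hfun] at key
      refine key.subset ?_ (convex_Ioo 0 1)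
      intro t ht
      simp only [Set.mem_preimage, AffineMap.lineMap_apply, smul_eq_mul,
        vsub_eq_sub, vadd_eq_add, Set.mem_Ioi]
      have := hpos t ht
      nlinarith [ht.1, ht.2]
    have h3 : ConvexOn ℝ (Set.Ioo (0:ℝ) 1) (fun t : ℝ => (1 - σ) * (t * Real.log t)) := by
      refine ConvexOn.smul ha0 ?_
      exact Real.convexOn_mul_log.subset (fun t ht => le_of_lt ht.1) (convex_Ioo 0 1)
    have h4 := (h2.add h3).add_const (Real.log σ)
    have heq : (fun t : ℝ => Real.log σ - Real.log (1 - (1 - σ) * t) + (1 - σ) * t * Real.log t)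
        = ((fun t : ℝ => -Real.log (1 - (1 - σ) * t)) + fun t : ℝ => (1 - σ) * (t * Real.log t))
          + fun _ : ℝ => Real.log σ := by
      funext t
      simp only [Pi.add_apply]
      ring
    rw [heq]
    exact h4
  · intro t ht
    obtain ⟨ht0, ht1⟩ := ht
    -- log(1 - (1-σ)t) = log((1-t)•1 + t•σ) ≥ (1-t) log 1 + t log σ
    have hcc := strictConcaveOn_log_Ioi.concaveOn.2 (Set.mem_Ioi.2 one_pos)
      (Set.mem_Ioi.2 hσ0) (by linarith : (0:ℝ) ≤ 1 - t) (le_of_lt ht0) (by ring)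
    simp only [smul_eq_mul, Real.log_one, mul_one, mul_zero] at hcc
    have heq : (1:ℝ) - (1 - σ) * t = 1 - t + t * σ := by ring
    rw [heq]
    have hlog1 : Real.log σ - Real.log (1 - t + t * σ) ≤ (1 - t) * Real.log σ := by
      nlinarith [hcc]
    have hlogσ : Real.log σ ≤ 0 := Real.log_nonpos (le_of_lt hσ0) hσ1
    have hlogt : Real.log t ≤ 0 := Real.log_nonpos (le_of_lt ht0) (le_of_lt ht1)
    have h2 : (1 - σ) * t * Real.log t ≤ 0 :=
      mul_nonpos_of_nonneg_of_nonpos (by positivity) hlogt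
    nlinarith [hlog1, h2, hlogσ, mul_nonpos_of_nonneg_of_nonpos (by linarith : (0:ℝ) ≤ 1 - t) hlogσ]
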